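/- Let L ⊆ ℝ² be a symmetric convex body with associated norm ‖·‖_L, and let x, y be boundary points of L (‖x‖_L = ‖y‖_L = 1) such that there exist subgradients g_x ∈ ∂F_0(x) and g_y ∈ ∂F_0(y) that span ℝ². Then for every boundary point z of L there exist a set P ⊆ {x, −x, y, −y, z} and a probability weight W on P with W(z) > 0 such that 0 is a geometric median: 0 ∈ GM_L(W). -/

import Mathlib

open scoped RealInnerProductSpace

/-- The objective function `F_{L,W}` of the geometric median problem:
`ξ ↦ ∑_{p ∈ P} W p * ‖ξ - p‖_L`, where `‖·‖_L` is the Minkowski gauge of `L`. -/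
noncomputable def medianObj {n : ℕ} (L : Set (EuclideanSpace ℝ (Fin n)))
    (P : Finset (EuclideanSpace ℝ (Fin n))) (W : EuclideanSpace ℝ (Fin n) → ℝ)
    (ξ : EuclideanSpace ℝ (Fin n)) : ℝ :=
  ∑ p ∈ P, W p * gauge L (ξ - p)

/-- The geometric median `GM_L(W)`: the set of global minimizers of `F_{L,W}`. -/
def geomMedian {n : ℕ} (L : Set (EuclideanSpace ℝ (Fin n)))
    (P : Finset (EuclideanSpace ℝ (Fin n))) (W : EuclideanSpace ℝ (Fin n) → ℝ) :
    Set (EuclideanSpace ℝ (Fin n)) :=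
  {ξ | ∀ η, medianObj L P W ξ ≤ medianObj L P W η}

/-- A symmetric convex body: compact, convex, with nonempty interior, and `L = -L`. -/
def IsSymmConvexBody {n : ℕ} (L : Set (EuclideanSpace ℝ (Fin n))) : Prop :=
  Convex ℝ L ∧ IsCompact L ∧ (interior L).Nonempty ∧ L = -L

/-- The subdifferential of `f : ℝⁿ → ℝ` at `ξ`. -/
def subdiff {n : ℕ} (f : EuclideanSpace ℝ (Fin n) → ℝ) (ξ : EuclideanSpace ℝ (Fin n)) :
    Set (EuclideanSpace ℝ (Fin n)) :=
  {g | ∀ y, f ξ + ⟪g, y - ξ⟫ ≤ f y}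

set_option maxHeartbeats 1000000 in
/-- Lemma 6: given boundary points `x, y` of `L ⊆ ℝ²` with subgradients spanning `ℝ²`,
for every boundary point `z` there is a probability weight `W` supported on
`P ⊆ {±x, ±y, z}` with `W z > 0` such that `0` is a geometric median. -/
theorem zero_is_geomMedian_of_spanning_subgradients
    (L : Set (EuclideanSpace ℝ (Fin 2))) (hL : IsSymmConvexBody L)
    (x y : EuclideanSpace ℝ (Fin 2)) (hx : gauge L x = 1) (hy : gauge L y = 1)
    (gx gy : EuclideanSpace ℝ (Fin 2))
    (hgx : gx ∈ subdiff (gauge L) x) (hgy : gy ∈ subdiff (gauge L) y)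
    (hspan : Submodule.span ℝ {gx, gy} = ⊤)
    (z : EuclideanSpace ℝ (Fin 2)) (hz : gauge L z = 1) :
    ∃ (P : Finset (EuclideanSpace ℝ (Fin 2))) (W : EuclideanSpace ℝ (Fin 2) → ℝ),
      (P : Set (EuclideanSpace ℝ (Fin 2))) ⊆ {x, -x, y, -y, z} ∧
      (∀ p ∈ P, 0 ≤ W p) ∧ (∑ p ∈ P, W p) = 1 ∧
      z ∈ P ∧ 0 < W z ∧
      (0 : EuclideanSpace ℝ (Fin 2)) ∈ geomMedian L P W := by
  classical
  obtain ⟨hconv, -, ⟨u, hu⟩, hsymmL⟩ := hL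
  have hsymm : ∀ v ∈ L, -v ∈ L := by
    intro v hv
    rw [hsymmL] at hv
    exact Set.mem_neg.mp hv
  have hgneg : ∀ v, gauge L (-v) = gauge L v := gauge_neg hsymm
  have hnegu : -u ∈ interior L := by
    have hsub : -interior L ⊆ interior L := by
      apply interior_maximal ?_ isOpen_interior.neg
      intro v hv
      rw [hsymmL]
      exact Set.neg_subset_neg.mpr interior_subset hv
    exact hsub (Set.neg_mem_neg.mpr hu)
  have h0 : (0 : EuclideanSpace ℝ (Fin 2)) ∈ interior L := by
    have h0' := hconv.interior hu hnegu (by norm_num : (0:ℝ) ≤ 1/2)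
      (by norm_num : (0:ℝ) ≤ 1/2) (by norm_num)
    have : (1/2 : ℝ) • u + (1/2 : ℝ) • (-u) = 0 := by module
    rwa [this] at h0'
  have habs : Absorbent ℝ L := absorbent_nhds_zero (mem_interior_iff_mem_nhds.mp h0)
  have hz0 : z ≠ 0 := by
    rintro rfl; rw [gauge_zero] at hz; norm_num at hz
  -- Hahn–Banach: a linear functional below the gauge, equal to 1 at z
  obtain ⟨g, hg1, hg2⟩ := exists_extension_of_le_sublinear
    (LinearPMap.mkSpanSingleton z (1:ℝ) hz0) (gauge L)
    (fun c hc v => by rw [gauge_smul_of_nonneg hc.le, smul_eq_mul])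
    (gauge_add_le hconv habs)
    (by
      rintro ⟨v, hv⟩
      obtain ⟨c, hc⟩ := Submodule.mem_span_singleton.mp hv
      have hveq : (⟨v, hv⟩ : (LinearPMap.mkSpanSingleton z (1:ℝ) hz0).domain)
          = ⟨c • z, hc ▸ hv⟩ := Subtype.ext hc.symm
      rw [hveq]
      simp only [LinearPMap.mkSpanSingleton'_apply, smul_eq_mul, mul_one]
      rcases le_or_gt 0 c with h | h
      · rw [gauge_smul_of_nonneg h, hz, smul_eq_mul, mul_one, RingHom.id_apply]
      · exact h.le.trans (gauge_nonneg _))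
  have hgz1 : g z = 1 := by
    have h := hg1 ⟨z, Submodule.mem_span_singleton_self z⟩
    rw [LinearPMap.mkSpanSingleton_apply] at h
    exact h
  set gz : EuclideanSpace ℝ (Fin 2) :=
    (InnerProductSpace.toDual ℝ (EuclideanSpace ℝ (Fin 2))).symm
      (LinearMap.toContinuousLinearMap g) with hgzdef
  have hgzv : ∀ v, ⟪gz, v⟫ = g v := by
    intro v
    rw [hgzdef, InnerProductSpace.toDual_symm_apply]
    rfl
  -- subgradient facts
  have key : ∀ (p g' : EuclideanSpace ℝ (Fin 2)), gauge L p = 1 →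
      g' ∈ subdiff (gauge L) p → (⟪g', p⟫ = 1 ∧ ∀ v, ⟪g', v⟫ ≤ gauge L v) := by
    intro p g' hp hg'
    have h1 := hg' 0
    have h2 := hg' ((2:ℝ) • p)
    rw [hp, zero_sub, inner_neg_right, gauge_zero] at h1
    have h2x : (2:ℝ) • p - p = p := by module
    rw [hp, h2x, gauge_smul_of_nonneg (by norm_num : (0:ℝ) ≤ 2), hp, smul_eq_mul,
      mul_one] at h2
    have hip : ⟪g', p⟫ = 1 := le_antisymm (by linarith) (by linarith)
    refine ⟨hip, fun v => ?_⟩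
    have h3 := hg' v
    rw [hp, inner_sub_right, hip] at h3
    linarith
  obtain ⟨hipx, hlex⟩ := key x gx hx hgx
  obtain ⟨hipy, hley⟩ := key y gy hy hgy
  have hlez : ∀ v, ⟪gz, v⟫ ≤ gauge L v := fun v => by rw [hgzv]; exact hg2 v
  have hipz : ⟪gz, z⟫ = 1 := by rw [hgzv]; exact hgz1
  -- decompose gz in the basis gx, gy
  have hgzmem : gz ∈ Submodule.span ℝ {gx, gy} := by rw [hspan]; trivial
  obtain ⟨α, β, hαβ⟩ := Submodule.mem_span_pair.mp hgzmem
  -- weights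
  set E1 : ℝ := 1 + |α| + |β| with hE1
  have hE1pos : 0 < E1 := by positivity
  set e : ℝ := (4 * E1)⁻¹ with he
  have hepos : 0 < e := by positivity
  have heE1 : e * E1 = 1/4 := by
    rw [he]; field_simp
  have habsα : e * α ≤ 1/4 ∧ -(e * α) ≤ 1/4 := by
    constructor
    · nlinarith [le_abs_self α, abs_nonneg β, hepos.le]
    · nlinarith [neg_abs_le α, abs_nonneg β, hepos.le]
  have habsβ : e * β ≤ 1/4 ∧ -(e * β) ≤ 1/4 := by
    constructor
    · nlinarith [le_abs_self β, abs_nonneg α, hepos.le]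
    · nlinarith [neg_abs_le β, abs_nonneg α, hepos.le]
  have he4 : e ≤ 1/4 := by nlinarith [abs_nonneg α, abs_nonneg β]
  set a : ℝ := ((1 - e)/2 - e * α)/2 with ha_def
  set b : ℝ := ((1 - e)/2 + e * α)/2 with hb_def
  set c : ℝ := ((1 - e)/2 - e * β)/2 with hc_def
  set d : ℝ := ((1 - e)/2 + e * β)/2 with hd_def
  have ha : 0 ≤ a := by rw [ha_def]; linarith [habsα.1]
  have hb : 0 ≤ b := by rw [hb_def]; linarith [habsα.2]
  have hc : 0 ≤ c := by rw [hc_def]; linarith [habsβ.1]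
  have hd : 0 ≤ d := by rw [hd_def]; linarith [habsβ.2]
  set P : Finset (EuclideanSpace ℝ (Fin 2)) := {x, -x, y, -y, z} with hP
  set W : EuclideanSpace ℝ (Fin 2) → ℝ := fun q =>
    (if q = x then a else 0) + (if q = -x then b else 0) + (if q = y then c else 0) +
    (if q = -y then d else 0) + (if q = z then e else 0) with hW
  have hxP : x ∈ P := by simp [hP]
  have hnxP : -x ∈ P := by simp [hP]
  have hyP : y ∈ P := by simp [hP]
  have hnyP : -y ∈ P := by simp [hP]
  have hzP : z ∈ P := by simp [hP]
  have hsum2 : ∀ (ξ p : EuclideanSpace ℝ (Fin 2)) (t : ℝ), p ∈ P →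
      ∑ q ∈ P, (if q = p then t else 0) * gauge L (ξ - q) = t * gauge L (ξ - p) := by
    intro ξ p t hp
    have hcg : ∀ q ∈ P, (if q = p then t else 0) * gauge L (ξ - q)
        = if q = p then t * gauge L (ξ - p) else 0 := by
      intro q _
      by_cases h : q = p
      · subst h; simp
      · simp [h]
    rw [Finset.sum_congr rfl hcg, Finset.sum_ite_eq']
    simp [hp]
  have hobj : ∀ ξ, medianObj L P W ξ = a * gauge L (ξ - x) + b * gauge L (ξ - -x)
      + c * gauge L (ξ - y) + d * gauge L (ξ - -y) + e * gauge L (ξ - z) := by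
    intro ξ
    have step : ∀ q ∈ P, W q * gauge L (ξ - q) =
        (if q = x then a else 0) * gauge L (ξ - q) +
        (if q = -x then b else 0) * gauge L (ξ - q) +
        (if q = y then c else 0) * gauge L (ξ - q) +
        (if q = -y then d else 0) * gauge L (ξ - q) +
        (if q = z then e else 0) * gauge L (ξ - q) := by
      intro q _
      rw [hW]; ring
    rw [medianObj, Finset.sum_congr rfl step, Finset.sum_add_distrib,
      Finset.sum_add_distrib, Finset.sum_add_distrib, Finset.sum_add_distrib,
      hsum2 ξ x a hxP, hsum2 ξ (-x) b hnxP, hsum2 ξ y c hyP, hsum2 ξ (-y) d hnyP,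
      hsum2 ξ z e hzP]
  refine ⟨P, W, ?_, ?_, ?_, hzP, ?_, ?_⟩
  · intro q hq
    simp only [hP] at hq
    simpa using hq
  · intro p _
    rw [hW]
    dsimp only
    split_ifs <;> linarith [hepos]
  · have hsum1 : ∀ (p : EuclideanSpace ℝ (Fin 2)) (t : ℝ), p ∈ P →
        ∑ q ∈ P, (if q = p then t else 0) = t := by
      intro p t hp
      rw [Finset.sum_ite_eq']
      simp [hp]
    have : ∑ p ∈ P, W p = a + b + c + d + e := by
      rw [hW]
      simp only
      rw [Finset.sum_add_distrib, Finset.sum_add_distrib, Finset.sum_add_distrib,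
        Finset.sum_add_distrib, hsum1 x a hxP, hsum1 (-x) b hnxP, hsum1 y c hyP,
        hsum1 (-y) d hnyP, hsum1 z e hzP]
    rw [this, ha_def, hb_def, hc_def, hd_def]
    ring
  · rw [hW]
    dsimp only
    rw [if_pos rfl]
    have : ∀ t : Prop, ∀ [Decidable t], ∀ v : ℝ, 0 ≤ v → (0:ℝ) ≤ if t then v else 0 := by
      intro t _ v hv; split_ifs <;> simp [hv]
    have h1 := this (z = x) a ha
    have h2 := this (z = -x) b hb
    have h3 := this (z = y) c hc
    have h4 := this (z = -y) d hd
    linarith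
  · simp only [geomMedian, Set.mem_setOf_eq]
    intro η
    rw [hobj 0, hobj η]
    have e1 : gauge L (0 - x) = 1 := by rw [zero_sub, hgneg, hx]
    have e2 : gauge L (0 - -x) = 1 := by rw [zero_sub, neg_neg, hx]
    have e3 : gauge L (0 - y) = 1 := by rw [zero_sub, hgneg, hy]
    have e4 : gauge L (0 - -y) = 1 := by rw [zero_sub, neg_neg, hy]
    have e5 : gauge L (0 - z) = 1 := by rw [zero_sub, hgneg, hz]
    rw [e1, e2, e3, e4, e5]
    have b1 : 1 - ⟪gx, η⟫ ≤ gauge L (η - x) := by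
      have h := hlex (x - η)
      rw [inner_sub_right, hipx] at h
      rw [← hgneg (η - x), neg_sub]
      linarith
    have b2 : 1 + ⟪gx, η⟫ ≤ gauge L (η - -x) := by
      have h := hlex (η + x)
      rw [inner_add_right, hipx] at h
      rw [sub_neg_eq_add]
      linarith
    have b3 : 1 - ⟪gy, η⟫ ≤ gauge L (η - y) := by
      have h := hley (y - η)
      rw [inner_sub_right, hipy] at h
      rw [← hgneg (η - y), neg_sub]
      linarith
    have b4 : 1 + ⟪gy, η⟫ ≤ gauge L (η - -y) := by
      have h := hley (η + y)
      rw [inner_add_right, hipy] at h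
      rw [sub_neg_eq_add]
      linarith
    have b5 : 1 - ⟪gz, η⟫ ≤ gauge L (η - z) := by
      have h := hlez (z - η)
      rw [inner_sub_right, hipz] at h
      rw [← hgneg (η - z), neg_sub]
      linarith
    have hinner : ⟪gz, η⟫ = α * ⟪gx, η⟫ + β * ⟪gy, η⟫ := by
      rw [← hαβ, inner_add_left, real_inner_smul_left, real_inner_smul_left]
    have hZ : e * ⟪gz, η⟫ = (b - a) * ⟪gx, η⟫ + (d - c) * ⟪gy, η⟫ := by
      rw [hinner, ha_def, hb_def, hc_def, hd_def]
      ring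
    nlinarith [mul_le_mul_of_nonneg_left b1 ha, mul_le_mul_of_nonneg_left b2 hb,
      mul_le_mul_of_nonneg_left b3 hc, mul_le_mul_of_nonneg_left b4 hd,
      mul_le_mul_of_nonneg_left b5 hepos.le, hZ]
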